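/- Let T be a finite weighted tree (a connected acyclic graph with positive edge weights, with the induced shortest-path metric). Then the Lipschitz free space F(T) over T is linearly isometric to ℓ₁^k, where k is the number of edges of T. -/

import Mathlib

set_option linter.unusedSectionVars false
set_option maxHeartbeats 1000000


open Finset

/-- The Lipschitz-free (Kantorovich–Rubinstein) norm of a molecule on a finite
metric space, expressed via duality with `1`-Lipschitz functions. -/
noncomputable def freeNorm (M : Type*) [MetricSpace M] [Fintype M] (m : M → ℝ) : ℝ :=
  sSup {r : ℝ | ∃ f : M → ℝ, LipschitzWith 1 f ∧ r = ∑ p, m p * f p}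

/-- Molecules: the underlying vector space of the Lipschitz free space on a finite space;
equipped with `freeNorm` it is the Lipschitz free space `F(M)`. -/
def molecules (M : Type*) [Fintype M] : Submodule ℝ (M → ℝ) where
  carrier := {m | ∑ p, m p = 0}
  add_mem' := by
    intro a b ha hb
    simp only [Set.mem_setOf_eq, Pi.add_apply, Finset.sum_add_distrib] at *
    rw [ha, hb]; ring
  zero_mem' := by simp
  smul_mem' := by
    intro c a ha
    simp only [Set.mem_setOf_eq, Pi.smul_apply, smul_eq_mul, ← Finset.mul_sum] at *
    rw [ha]; ring

/-- The norm of `ℓ₁^k`. -/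
def l1norm {k : ℕ} (x : Fin k → ℝ) : ℝ := ∑ i, |x i|

/-- The shortest-path distance of a positively weighted finite tree: the sum of the
weights of the edges along the unique path. -/
noncomputable def treeDist {V : Type*} (G : SimpleGraph V) (hT : G.IsTree)
    (w : Sym2 V → ℝ) (x y : V) : ℝ :=
  ((((hT.existsUnique_path x y).exists.choose).edges).map w).sum


namespace TreeFree
open SimpleGraph
variable {V : Type*} [Fintype V] [DecidableEq V]
  {G : SimpleGraph V} [DecidableRel G.Adj]

noncomputable def pp (hT : G.IsTree) (x y : V) : G.Walk x y :=
  (hT.existsUnique_path x y).exists.choose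

lemma pp_isPath (hT : G.IsTree) (x y : V) : (pp hT x y).IsPath :=
  (hT.existsUnique_path x y).exists.choose_spec

lemma pp_unique (hT : G.IsTree) {x y : V} {q : G.Walk x y} (hq : q.IsPath) :
    q = pp hT x y :=
  (hT.existsUnique_path x y).unique hq (pp_isPath hT x y)

lemma pp_self (hT : G.IsTree) (x : V) : pp hT x x = SimpleGraph.Walk.nil :=
  (pp_unique hT SimpleGraph.Walk.IsPath.nil).symm

lemma concat_of_not_mem (hT : G.IsTree) {O a b : V} (h : G.Adj a b)
    (hb : b ∉ (pp hT O a).support) : pp hT O b = (pp hT O a).concat h := by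
  refine (pp_unique hT ?_).symm
  refine SimpleGraph.Walk.IsPath.mk' ?_
  rw [SimpleGraph.Walk.support_concat]
  exact List.Nodup.append (pp_isPath hT O a).support_nodup (by simp)
    (by simpa using hb)

lemma not_mem_of_mem (hT : G.IsTree) {O a b : V} (h : G.Adj a b)
    (hb : b ∈ (pp hT O a).support) : a ∉ (pp hT O b).support := by
  have hpb : pp hT O b = (pp hT O a).takeUntil b hb :=
    (pp_unique hT ((pp_isPath hT O a).takeUntil hb)).symm
  rw [hpb]
  intro ha
  have hsp := (pp_isPath hT O a).support_nodup
  rw [← SimpleGraph.Walk.take_spec (pp hT O a) hb, SimpleGraph.Walk.support_append] at hsp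
  have hdrop : a ∈ (((pp hT O a).dropUntil b hb).support).tail := by
    have h1 : a ∈ ((pp hT O a).dropUntil b hb).support := SimpleGraph.Walk.end_mem_support _
    rw [SimpleGraph.Walk.support_eq_cons] at h1
    rcases List.mem_cons.1 h1 with h2 | h2
    · exact absurd h2 h.ne
    · exact h2
  exact (List.disjoint_of_nodup_append hsp) ha hdrop

lemma orient (hT : G.IsTree) (O : V) {e : Sym2 V} (he : e ∈ G.edgeSet) :
    ∃ d : G.Dart, d.edge = e ∧ pp hT O d.snd = (pp hT O d.fst).concat d.adj := by
  induction e using Sym2.ind with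
  | _ a b =>
    rw [SimpleGraph.mem_edgeSet] at he
    by_cases hb : b ∈ (pp hT O a).support
    · exact ⟨⟨(b, a), he.symm⟩, Sym2.eq_swap,
        concat_of_not_mem hT he.symm (not_mem_of_mem hT he hb)⟩
    · exact ⟨⟨(a, b), he⟩, rfl, concat_of_not_mem hT he hb⟩

/-- canonical orientation pair (near, far) of an edge, relative to root `O`. -/
noncomputable def op (hT : G.IsTree) (O : V) (e : Sym2 V) : V × V :=
  if he : e ∈ G.edgeSet
    then ((orient hT O he).choose.fst, (orient hT O he).choose.snd)
  else (O, O)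

lemma op_spec (hT : G.IsTree) (O : V) {e : Sym2 V} (he : e ∈ G.edgeSet) :
    ∃ h : G.Adj (op hT O e).1 (op hT O e).2, e = s((op hT O e).1, (op hT O e).2) ∧
      pp hT O (op hT O e).2 = (pp hT O (op hT O e).1).concat h := by
  obtain ⟨h1, h2⟩ := (orient hT O he).choose_spec
  have hop : op hT O e = ((orient hT O he).choose.fst, (orient hT O he).choose.snd) := by
    simp only [op, dif_pos he]
  rw [hop]
  exact ⟨(orient hT O he).choose.adj, h1.symm, h2⟩

lemma op_far_edges (hT : G.IsTree) (O : V) {e : Sym2 V} (he : e ∈ G.edgeSet) :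
    (pp hT O (op hT O e).2).edges = (pp hT O (op hT O e).1).edges ++ [e] := by
  obtain ⟨h, hs, hc⟩ := op_spec hT O he
  rw [hc, SimpleGraph.Walk.edges_concat, ← hs, List.concat_eq_append]

lemma op_near_not_mem (hT : G.IsTree) (O : V) {e : Sym2 V} (he : e ∈ G.edgeSet) :
    e ∉ (pp hT O (op hT O e).1).edges := by
  have hnd := (pp_isPath hT O (op hT O e).2).isTrail.edges_nodup
  rw [op_far_edges hT O he] at hnd
  have := List.disjoint_of_nodup_append hnd
  intro hmem
  exact this hmem (List.mem_singleton_self e)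

/-- if the chosen path to `v` is the chosen path to `u` plus the edge `(u,v)`,
then the canonical orientation of that edge is `(u, v)`. -/
lemma op_eq_of_concat (hT : G.IsTree) (O : V) {u v : V} (h : G.Adj u v)
    (hc : pp hT O v = (pp hT O u).concat h) : op hT O s(u, v) = (u, v) := by
  have he : s(u, v) ∈ G.edgeSet := h
  obtain ⟨hadj, hs, hcc⟩ := op_spec hT O he
  rcases Sym2.eq_iff.1 hs with ⟨h1, h2⟩ | ⟨h1, h2⟩
  · exact Prod.ext h1.symm h2.symm
  · exfalso
    -- then pp O u = (pp O v).concat and pp O v = (pp O u).concat : length contradiction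
    have l1 : (pp hT O v).length = (pp hT O u).length + 1 := by
      rw [hc, SimpleGraph.Walk.length_concat]
    have l2 : (pp hT O (op hT O s(u,v)).2).length = (pp hT O (op hT O s(u,v)).1).length + 1 := by
      rw [hcc, SimpleGraph.Walk.length_concat]
    rw [← h1, ← h2] at l2
    omega


/-- telescoping a function along the chosen path from the root. -/
lemma tele (hT : G.IsTree) (O : V) (g : V → ℝ) (v : V) :
    g v - g O = ∑ e ∈ (pp hT O v).edges.toFinset,
      (g (op hT O e).2 - g (op hT O e).1) := by
  generalize hn : (pp hT O v).length = n
  induction n using Nat.strong_induction_on generalizing v with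
  | _ n ih =>
    by_cases hv : v = O
    · rw [hv, pp_self hT O]
      simp
    · -- decompose the path as a concat
      have hnn : ¬ (pp hT O v).Nil := by
        intro hnil
        exact hv (SimpleGraph.Walk.Nil.eq hnil).symm
      obtain ⟨x, h, q, hq⟩ := SimpleGraph.Walk.not_nil_iff.1 hnn
      obtain ⟨y, r, h', hr⟩ := SimpleGraph.Walk.exists_cons_eq_concat h q
      have hp : pp hT O v = r.concat h' := by rw [← hr, ← hq]
      have hrp : r.IsPath := by
        have := pp_isPath hT O v
        rw [hp, SimpleGraph.Walk.concat_eq_append] at this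
        exact this.of_append_left
      have hre : r = pp hT O y := pp_unique hT hrp
      have hcc : pp hT O v = (pp hT O y).concat h' := by rw [hp, hre]
      have hop := op_eq_of_concat hT O h' hcc
      have hee : s(y, v) ∈ G.edgeSet := h'
      have hedges : (pp hT O v).edges = (pp hT O y).edges ++ [s(y, v)] := by
        rw [hcc, SimpleGraph.Walk.edges_concat, List.concat_eq_append]
      have hnotmem : s(y, v) ∉ (pp hT O y).edges := by
        have hnd := (pp_isPath hT O v).isTrail.edges_nodup
        rw [hedges] at hnd
        intro hmem
        exact (List.disjoint_of_nodup_append hnd) hmem (List.mem_singleton_self _)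
      have hlen : (pp hT O y).length = r.length := by rw [hre]
      have hlt : (pp hT O y).length < n := by
        rw [← hn, hcc, SimpleGraph.Walk.length_concat]
        omega
      have ihy := ih _ hlt y rfl
      rw [hedges]
      rw [List.toFinset_append, List.toFinset_cons, List.toFinset_nil]
      have hdisj : s(y, v) ∉ (pp hT O y).edges.toFinset := by
        simpa using hnotmem
      rw [Finset.union_comm, LawfulSingleton.insert_empty_eq, Finset.sum_union (by simpa using hdisj)]
      rw [Finset.sum_singleton, hop]
      rw [← ihy]
      ring


/-- the flow of a molecule through an (oriented) edge. -/
noncomputable def flow (hT : G.IsTree) (O : V) (e : Sym2 V) (m : V → ℝ) : ℝ :=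
  ∑ v ∈ univ.filter (fun v => e ∈ (pp hT O v).edges), m v

lemma flow_add (hT : G.IsTree) (O : V) (e : Sym2 V) (m m' : V → ℝ) :
    flow hT O e (m + m') = flow hT O e m + flow hT O e m' := by
  simp [flow, Finset.sum_add_distrib]

lemma flow_smul (hT : G.IsTree) (O : V) (e : Sym2 V) (c : ℝ) (m : V → ℝ) :
    flow hT O e (c • m) = c * flow hT O e m := by
  simp [flow, Finset.mul_sum]

/-- the fundamental identity: pairing a molecule with any function is a sum over edges
of flows times increments. -/
lemma pair_eq_flow (hT : G.IsTree) (O : V) (g m : V → ℝ) (hm : ∑ p, m p = 0) :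
    ∑ p, m p * g p =
      ∑ e ∈ G.edgeFinset, flow hT O e m * (g (op hT O e).2 - g (op hT O e).1) := by
  have h1 : ∑ p, m p * g p = ∑ p, m p * (g p - g O) := by
    have : ∑ p, m p * (g p - g O) = ∑ p, m p * g p - (∑ p, m p) * g O := by
      rw [Finset.sum_mul, ← Finset.sum_sub_distrib]
      exact Finset.sum_congr rfl fun p _ => by ring
    rw [this, hm]; ring
  rw [h1]
  have h2 : ∀ p : V, m p * (g p - g O) =
      ∑ e ∈ G.edgeFinset.filter (fun e => e ∈ (pp hT O p).edges),
        m p * (g (op hT O e).2 - g (op hT O e).1) := by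
    intro p
    have hset : (pp hT O p).edges.toFinset
        = G.edgeFinset.filter (fun e => e ∈ (pp hT O p).edges) := by
      ext e
      simp only [List.mem_toFinset, Finset.mem_filter, SimpleGraph.mem_edgeFinset]
      exact ⟨fun h => ⟨(pp hT O p).edges_subset_edgeSet h, h⟩, fun h => h.2⟩
    rw [tele hT O g p, hset, Finset.mul_sum]
  calc ∑ p, m p * (g p - g O)
      = ∑ p, ∑ e ∈ G.edgeFinset.filter (fun e => e ∈ (pp hT O p).edges),
          m p * (g (op hT O e).2 - g (op hT O e).1) := Finset.sum_congr rfl fun p _ => h2 p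
    _ = ∑ p : V, ∑ e ∈ G.edgeFinset,
          if e ∈ (pp hT O p).edges then m p * (g (op hT O e).2 - g (op hT O e).1) else 0 := by
        exact Finset.sum_congr rfl fun p _ => Finset.sum_filter _ _
    _ = ∑ e ∈ G.edgeFinset, ∑ p : V,
          if e ∈ (pp hT O p).edges then m p * (g (op hT O e).2 - g (op hT O e).1) else 0 :=
        Finset.sum_comm
    _ = ∑ e ∈ G.edgeFinset, flow hT O e m * (g (op hT O e).2 - g (op hT O e).1) := by
        refine Finset.sum_congr rfl fun e _ => ?_
        rw [flow, Finset.sum_mul, ← Finset.sum_filter]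

/-- telescoping along an arbitrary walk (over darts). -/
lemma teleWalk (g : V → ℝ) {x y : V} (p : G.Walk x y) :
    g y - g x = (p.darts.map (fun d => g d.snd - g d.fst)).sum := by
  induction p with
  | nil => simp
  | cons h q ihq =>
    rw [SimpleGraph.Walk.darts_cons, List.map_cons, List.sum_cons, ← ihq]
    ring


lemma list_abs_sum_le {α : Type*} (f b : α → ℝ) :
    ∀ l : List α, (∀ d ∈ l, |f d| ≤ b d) → |(l.map f).sum| ≤ (l.map b).sum := by
  intro l
  induction l with
  | nil => simp
  | cons d t ih =>
    intro h
    simp only [List.map_cons, List.sum_cons]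
    refine (abs_add_le _ _).trans ?_
    exact add_le_add (h d (List.mem_cons_self (a := d) (l := t))) (ih fun x hx => h x (List.mem_cons_of_mem d hx))

section metric
variable [MetricSpace V] {w : Sym2 V → ℝ}

lemma treeDist_eq (hT : G.IsTree) (w : Sym2 V → ℝ) (x y : V) :
    treeDist G hT w x y = ((pp hT x y).edges.map w).sum := rfl

lemma dist_adj (hT : G.IsTree) (hdist : ∀ x y : V, dist x y = treeDist G hT w x y)
    {a b : V} (h : G.Adj a b) : dist a b = w s(a, b) := by
  have hpath : (SimpleGraph.Walk.cons h SimpleGraph.Walk.nil).IsPath := by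
    simp [SimpleGraph.Walk.isPath_def, h.ne]
  have hp : pp hT a b = SimpleGraph.Walk.cons h SimpleGraph.Walk.nil :=
    (pp_unique hT hpath).symm
  rw [hdist, treeDist_eq, hp]
  simp

lemma w_nonneg (hT : G.IsTree) (hw : ∀ e ∈ G.edgeSet, 0 < w e) {e : Sym2 V}
    (he : e ∈ G.edgeSet) : 0 ≤ w e := (hw e he).le

/-- Lipschitz functions change by at most `w e` across the edge `e`. -/
lemma step_bound (hT : G.IsTree) (O : V)
    (hdist : ∀ x y : V, dist x y = treeDist G hT w x y)
    {f : V → ℝ} (hf : LipschitzWith 1 f) {e : Sym2 V} (he : e ∈ G.edgeSet) :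
    |f (op hT O e).2 - f (op hT O e).1| ≤ w e := by
  obtain ⟨h, hs, -⟩ := op_spec hT O he
  have := hf.dist_le_mul (op hT O e).2 (op hT O e).1
  rw [Real.dist_eq] at this
  calc |f (op hT O e).2 - f (op hT O e).1| ≤ 1 * dist (op hT O e).2 (op hT O e).1 := this
    _ = dist (op hT O e).1 (op hT O e).2 := by rw [one_mul, _root_.dist_comm]
    _ = w e := by rw [dist_adj hT hdist h, ← hs]

/-- The upper bound for the pairing against a `1`-Lipschitz function. -/
lemma pair_le (hT : G.IsTree) (O : V) (hw : ∀ e ∈ G.edgeSet, 0 < w e)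
    (hdist : ∀ x y : V, dist x y = treeDist G hT w x y)
    {f : V → ℝ} (hf : LipschitzWith 1 f) (m : V → ℝ) (hm : ∑ p, m p = 0) :
    ∑ p, m p * f p ≤ ∑ e ∈ G.edgeFinset, |flow hT O e m| * w e := by
  rw [pair_eq_flow hT O f m hm]
  refine Finset.sum_le_sum fun e hee => ?_
  have he : e ∈ G.edgeSet := SimpleGraph.mem_edgeFinset.1 hee
  calc flow hT O e m * (f (op hT O e).2 - f (op hT O e).1)
      ≤ |flow hT O e m * (f (op hT O e).2 - f (op hT O e).1)| := le_abs_self _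
    _ = |flow hT O e m| * |f (op hT O e).2 - f (op hT O e).1| := abs_mul _ _
    _ ≤ |flow hT O e m| * w e :=
        mul_le_mul_of_nonneg_left (step_bound hT O hdist hf he) (abs_nonneg _)

/-- The optimal Lipschitz function for a molecule. -/
noncomputable def gstar (hT : G.IsTree) (O : V) (w : Sym2 V → ℝ) (m : V → ℝ) (v : V) : ℝ :=
  ∑ e ∈ (pp hT O v).edges.toFinset, (if 0 ≤ flow hT O e m then w e else -w e)

lemma gstar_step (hT : G.IsTree) (O : V) (w : Sym2 V → ℝ) (m : V → ℝ) {e : Sym2 V}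
    (he : e ∈ G.edgeSet) :
    gstar hT O w m (op hT O e).2 - gstar hT O w m (op hT O e).1
      = (if 0 ≤ flow hT O e m then w e else -w e) := by
  have hfe := op_far_edges hT O he
  have hne := op_near_not_mem hT O he
  rw [gstar, gstar, hfe]
  rw [List.toFinset_append, List.toFinset_cons, List.toFinset_nil, LawfulSingleton.insert_empty_eq,
    Finset.union_comm, Finset.sum_union (by simpa using hne)]
  rw [Finset.sum_singleton]
  ring

lemma gstar_adj_bound (hT : G.IsTree) (O : V) (hw : ∀ e ∈ G.edgeSet, 0 < w e)
    (m : V → ℝ) {u v : V} (h : G.Adj u v) :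
    |gstar hT O w m v - gstar hT O w m u| ≤ w s(u, v) := by
  have he : s(u, v) ∈ G.edgeSet := h
  obtain ⟨hadj, hs, -⟩ := op_spec hT O he
  have hstep := gstar_step hT O w m he
  have habs : |gstar hT O w m (op hT O s(u,v)).2 - gstar hT O w m (op hT O s(u,v)).1|
      = w s(u, v) := by
    rw [hstep]
    split <;> simp [abs_of_nonneg (hw _ he).le, abs_of_nonpos (neg_nonpos.2 (hw _ he).le)]
  rcases Sym2.eq_iff.1 hs with ⟨h1, h2⟩ | ⟨h1, h2⟩
  · rw [← h2, ← h1] at habs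
    exact habs.le
  · rw [← h1, ← h2] at habs
    rw [abs_sub_comm] at habs
    exact habs.le


lemma gstar_lipschitz (hT : G.IsTree) (O : V) (hw : ∀ e ∈ G.edgeSet, 0 < w e)
    (hdist : ∀ x y : V, dist x y = treeDist G hT w x y) (m : V → ℝ) :
    LipschitzWith 1 (gstar hT O w m) := by
  refine LipschitzWith.of_dist_le_mul fun x y => ?_
  rw [NNReal.coe_one, one_mul, Real.dist_eq, hdist, treeDist_eq]
  rw [abs_sub_comm, teleWalk (gstar hT O w m) (pp hT x y)]
  have hmap : (pp hT x y).edges.map w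
      = (pp hT x y).darts.map (fun d => w d.edge) := by
    rw [SimpleGraph.Walk.edges, List.map_map]
    rfl
  rw [hmap]
  refine list_abs_sum_le _ _ _ fun d hd => ?_
  exact gstar_adj_bound hT O hw m d.adj

lemma pair_gstar (hT : G.IsTree) (O : V) (m : V → ℝ) (hm : ∑ p, m p = 0) :
    ∑ p, m p * gstar hT O w m p = ∑ e ∈ G.edgeFinset, |flow hT O e m| * w e := by
  rw [pair_eq_flow hT O _ m hm]
  refine Finset.sum_congr rfl fun e hee => ?_
  have he : e ∈ G.edgeSet := SimpleGraph.mem_edgeFinset.1 hee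
  rw [gstar_step hT O w m he]
  by_cases h : 0 ≤ flow hT O e m
  · rw [if_pos h, abs_of_nonneg h]
  · rw [if_neg h, abs_of_neg (lt_of_not_ge h)]
    ring


lemma freeNorm_eq (hT : G.IsTree) (O : V)
    (hw : ∀ e ∈ G.edgeSet, 0 < w e)
    (hdist : ∀ x y : V, dist x y = treeDist G hT w x y)
    (m : V → ℝ) (hm : ∑ p, m p = 0) :
    freeNorm V m = ∑ e ∈ G.edgeFinset, |flow hT O e m| * w e := by
  have hub : ∀ r ∈ {r : ℝ | ∃ f : V → ℝ, LipschitzWith 1 f ∧ r = ∑ p, m p * f p},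
      r ≤ ∑ e ∈ G.edgeFinset, |flow hT O e m| * w e := by
    rintro r ⟨f, hf, rfl⟩
    exact pair_le hT O hw hdist hf m hm
  have hmem : (∑ e ∈ G.edgeFinset, |flow hT O e m| * w e)
      ∈ {r : ℝ | ∃ f : V → ℝ, LipschitzWith 1 f ∧ r = ∑ p, m p * f p} :=
    ⟨gstar hT O w m, gstar_lipschitz hT O hw hdist m, (pair_gstar hT O m hm).symm⟩
  exact le_antisymm (csSup_le ⟨_, hmem⟩ hub) (le_csSup ⟨_, hub⟩ hmem)

end metric
end TreeFree

/-- the Lipschitz free space over a finite weighted tree (with positive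
edge weights and the induced shortest-path metric) is linearly isometric to `ℓ₁^k`,
where `k` is the number of edges of the tree. -/
theorem stmt0 {V : Type*} [Fintype V] [DecidableEq V] [MetricSpace V]
    (G : SimpleGraph V) [DecidableRel G.Adj] (hT : G.IsTree)
    (w : Sym2 V → ℝ) (hw : ∀ e ∈ G.edgeSet, 0 < w e)
    (hdist : ∀ x y : V, dist x y = treeDist G hT w x y) :
    ∃ T : molecules V ≃ₗ[ℝ] (Fin G.edgeFinset.card → ℝ),
      ∀ m : molecules V, freeNorm V m = l1norm (T m) := by
  classical
  obtain ⟨O⟩ := hT.isConnected.nonempty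
  set k := G.edgeFinset.card with hk
  let ε : Fin k ≃ {x // x ∈ G.edgeFinset} := (G.edgeFinset.equivFin).symm
  let L : molecules V →ₗ[ℝ] (Fin k → ℝ) :=
    { toFun := fun m i => TreeFree.flow hT O (ε i : Sym2 V) (m : V → ℝ) * w (ε i)
      map_add' := fun m m' => by
        funext i
        simp only [Submodule.coe_add, TreeFree.flow_add, Pi.add_apply]
        ring
      map_smul' := fun c m => by
        funext i
        simp only [Submodule.coe_smul, TreeFree.flow_smul, RingHom.id_apply, Pi.smul_apply,
          smul_eq_mul]
        ring }
  have hflow0 : ∀ (m : molecules V), L m = 0 → ∀ e ∈ G.edgeFinset,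
      TreeFree.flow hT O e (m : V → ℝ) = 0 := by
    intro m h0 e he
    have := congrFun h0 (ε.symm ⟨e, he⟩)
    simp only [L, LinearMap.coe_mk, AddHom.coe_mk, Equiv.apply_symm_apply, Pi.zero_apply] at this
    have hwe : w e ≠ 0 := (hw e (SimpleGraph.mem_edgeFinset.1 he)).ne'
    exact (mul_eq_zero.1 this).resolve_right hwe
  have hinj : Function.Injective L := by
    rw [← LinearMap.ker_eq_bot, LinearMap.ker_eq_bot']
    intro m h0
    have hm : ∑ p, (m : V → ℝ) p = 0 := m.2
    have hzero : ∀ v : V, (m : V → ℝ) v = 0 := by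
      intro v
      have hpair := TreeFree.pair_eq_flow hT O (fun p => if p = v then (1:ℝ) else 0)
        (m : V → ℝ) hm
      have hL : ∑ p, (m : V → ℝ) p * (if p = v then (1:ℝ) else 0) = (m : V → ℝ) v := by
        rw [Finset.sum_eq_single v]
        · simp
        · intro b _ hb; simp [hb]
        · intro hv; exact absurd (Finset.mem_univ v) hv
      rw [hL] at hpair
      rw [hpair]
      refine Finset.sum_eq_zero fun e he => ?_
      rw [hflow0 m h0 e he, zero_mul]
    exact Subtype.ext (funext hzero)
  let sumL : (V → ℝ) →ₗ[ℝ] ℝ :=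
    { toFun := fun m => ∑ p, m p
      map_add' := fun a b => Finset.sum_add_distrib
      map_smul' := fun c a => by simp [Finset.mul_sum] }
  have hker : molecules V = LinearMap.ker sumL := by
    ext m
    simp only [LinearMap.mem_ker, sumL, LinearMap.coe_mk, AddHom.coe_mk]
    rfl
  have hsurj : Function.Surjective sumL := by
    intro r
    refine ⟨fun p => if p = O then r else 0, ?_⟩
    simp [sumL]
  have hrank : Module.finrank ℝ (molecules V) = k := by
    have h1 := LinearMap.finrank_range_add_finrank_ker sumL
    rw [LinearMap.range_eq_top.2 hsurj, finrank_top, Module.finrank_self,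
      Module.finrank_pi] at h1
    have h2 := hT.card_edgeFinset
    rw [hker]
    omega
  have hrank2 : Module.finrank ℝ (Fin k → ℝ) = k := by
    rw [Module.finrank_pi, Fintype.card_fin]
  let T := LinearMap.linearEquivOfInjective L hinj (hrank.trans hrank2.symm)
  refine ⟨T, fun m => ?_⟩
  have hTm : T m = L m := LinearMap.linearEquivOfInjective_apply hinj (hrank.trans hrank2.symm) m
  rw [hTm]
  rw [TreeFree.freeNorm_eq hT O hw hdist (m : V → ℝ) m.2]
  rw [l1norm]
  have hterm : ∀ i : Fin k, |L m i| = |TreeFree.flow hT O (ε i : Sym2 V) (m : V → ℝ)| * w (ε i) := by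
    intro i
    have := hw (ε i : Sym2 V) (SimpleGraph.mem_edgeFinset.1 (ε i).2)
    simp only [L, LinearMap.coe_mk, AddHom.coe_mk]
    rw [abs_mul, abs_of_pos this]
  rw [Finset.sum_congr rfl fun i _ => hterm i]
  rw [← Finset.sum_coe_sort G.edgeFinset (fun e => |TreeFree.flow hT O e (m : V → ℝ)| * w e)]
  exact (Fintype.sum_equiv ε _ _ fun i => rfl).symm
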